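/- Dynamics of the reduced appendix example on its center manifold. Consider the planar system ẋ = x (y − x sin x), ẏ = −y² (y − x sin x). Then: (i) the origin is Lyapunov stable: for every ε > 0 there is δ > 0 such that every solution with |(x(0), y(0))| < δ satisfies |(x(t), y(t))| < ε for all t ≥ 0; (ii) the origin is not asymptotically stable: in every neighborhood of (0,0) there are initial conditions whose solutions do not converge to (0,0); and (iii) for every solution starting sufficiently close to the origin, every ω-limit point of the solution is an equilibrium of the form (a, a sin a) for some a ∈ ℝ. -/

import Mathlib

open Real Filter Set

/-- `(x, y)` is a solution on `[0, ∞)` of the reduced appendix system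
`ẋ = x (y - x sin x)`, `ẏ = -y² (y - x sin x)`. -/
def IsReducedSolution (x y : ℝ → ℝ) : Prop :=
  ∀ t : ℝ, 0 ≤ t →
    HasDerivAt x (x t * (y t - x t * Real.sin (x t))) t ∧
    HasDerivAt y (-(y t) ^ 2 * (y t - x t * Real.sin (x t))) t

lemma linear_zero_fwd {f h : ℝ → ℝ} {K a b : ℝ} (hab : a ≤ b)
    (hf : ∀ t ∈ Set.Icc a b, HasDerivAt f (h t * f t) t)
    (hK : ∀ t ∈ Set.Icc a b, |h t| ≤ K)
    (h0 : f a = 0) : ∀ t ∈ Set.Icc a b, f t = 0 := by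
  have hcont : ContinuousOn f (Set.Icc a b) := fun t ht =>
    (hf t ht).continuousAt.continuousWithinAt
  have key := norm_le_gronwallBound_of_norm_deriv_right_le (δ := 0) (K := K) (ε := 0)
      hcont (fun t ht => (hf t (Set.mem_Icc_of_Ico ht)).hasDerivWithinAt)
      (by simp [h0]) ?_
  · intro t ht
    have h2 := key t ht
    rw [gronwallBound_ε0_δ0] at h2
    simpa using le_antisymm h2 (norm_nonneg _)
  · intro t ht
    have h3 := hK t (Set.mem_Icc_of_Ico ht)
    rw [Real.norm_eq_abs, Real.norm_eq_abs, abs_mul, add_zero]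
    exact mul_le_mul_of_nonneg_right h3 (abs_nonneg _)

lemma linear_zero_bwd {f h : ℝ → ℝ} {K a b : ℝ} (hab : a ≤ b)
    (hf : ∀ t ∈ Set.Icc a b, HasDerivAt f (h t * f t) t)
    (hK : ∀ t ∈ Set.Icc a b, |h t| ≤ K)
    (hb0 : f b = 0) : f a = 0 := by
  have hmem : ∀ s ∈ Set.Icc a b, a + b - s ∈ Set.Icc a b := by
    intro s hs
    obtain ⟨h1, h2⟩ := hs
    exact ⟨by linarith, by linarith⟩
  have hF : ∀ s ∈ Set.Icc a b,
      HasDerivAt (fun s => f (a + b - s)) ((-h (a + b - s)) * f (a + b - s)) s := by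
    intro s hs
    have h2 : HasDerivAt (fun s : ℝ => a + b - s) (-1) s := by
      simpa using (hasDerivAt_id s).const_sub (a + b)
    have := (hf _ (hmem s hs)).comp s h2
    exact this.congr_deriv (by ring)
  have hz := linear_zero_fwd (K := K) hab hF
      (fun s hs => by simpa using hK _ (hmem s hs))
      (by simpa using hb0) b (Set.right_mem_Icc.2 hab)
  simpa using hz

lemma monoOn_Ici {f f' : ℝ → ℝ} {T : ℝ} (hd : ∀ t ∈ Set.Ici T, HasDerivAt f (f' t) t)
    (h0 : ∀ t ∈ Set.Ici T, 0 ≤ f' t) : MonotoneOn f (Set.Ici T) := by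
  apply monotoneOn_of_deriv_nonneg (convex_Ici T)
  · exact fun t ht => (hd t ht).continuousAt.continuousWithinAt
  · intro t ht
    rw [interior_Ici] at ht
    exact ((hd t (Set.Ioi_subset_Ici_self ht)).differentiableAt).differentiableWithinAt
  · intro t ht
    rw [interior_Ici] at ht
    rw [(hd t (Set.Ioi_subset_Ici_self ht)).deriv]
    exact h0 t (Set.Ioi_subset_Ici_self ht)

lemma antiOn_Ici {f f' : ℝ → ℝ} {T : ℝ} (hd : ∀ t ∈ Set.Ici T, HasDerivAt f (f' t) t)
    (h0 : ∀ t ∈ Set.Ici T, f' t ≤ 0) : AntitoneOn f (Set.Ici T) := by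
  apply antitoneOn_of_deriv_nonpos (convex_Ici T)
  · exact fun t ht => (hd t ht).continuousAt.continuousWithinAt
  · intro t ht
    rw [interior_Ici] at ht
    exact ((hd t (Set.Ioi_subset_Ici_self ht)).differentiableAt).differentiableWithinAt
  · intro t ht
    rw [interior_Ici] at ht
    rw [(hd t (Set.Ioi_subset_Ici_self ht)).deriv]
    exact h0 t (Set.Ioi_subset_Ici_self ht)

lemma const_of_Ici {f f' : ℝ → ℝ} (hd : ∀ t ∈ Set.Ici (0:ℝ), HasDerivAt f (f' t) t)
    (h0 : ∀ t ∈ Set.Ici (0:ℝ), f' t = 0) : ∀ t ∈ Set.Ici (0:ℝ), f t = f 0 := by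
  intro t ht
  have hm := monoOn_Ici hd (fun t ht => (h0 t ht).ge)
  have ha := antiOn_Ici hd (fun t ht => (h0 t ht).le)
  exact le_antisymm (ha (Set.self_mem_Ici) ht ht) (hm (Set.self_mem_Ici) ht ht)

lemma linear_zero_iff {f h : ℝ → ℝ}
    (hf : ∀ t ∈ Set.Ici (0:ℝ), HasDerivAt f (h t * f t) t)
    (hcont : ContinuousOn h (Set.Ici 0)) {t : ℝ} (ht : 0 ≤ t) :
    f t = 0 ↔ f 0 = 0 := by
  obtain ⟨K, hK⟩ := (isCompact_Icc (a := (0:ℝ)) (b := t)).exists_bound_of_continuousOn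
    (hcont.mono (Set.Icc_subset_Ici_self))
  have hf' : ∀ s ∈ Set.Icc (0:ℝ) t, HasDerivAt f (h s * f s) s :=
    fun s hs => hf s hs.1
  have hK' : ∀ s ∈ Set.Icc (0:ℝ) t, |h s| ≤ K := by
    intro s hs; simpa using hK s hs
  constructor
  · intro h1
    exact linear_zero_bwd ht hf' hK' h1
  · intro h1
    exact linear_zero_fwd ht hf' hK' h1 t (Set.right_mem_Icc.2 ht)

lemma linear_pos {f h : ℝ → ℝ}
    (hf : ∀ t ∈ Set.Ici (0:ℝ), HasDerivAt f (h t * f t) t)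
    (hcont : ContinuousOn h (Set.Ici 0)) (h0 : 0 < f 0) :
    ∀ t ∈ Set.Ici (0:ℝ), 0 < f t := by
  intro t ht
  rcases lt_trichotomy (f t) 0 with hlt | heq | hgt
  · -- IVT gives a zero in between
    have hfc : ContinuousOn f (Set.Icc 0 t) := fun s hs =>
      (hf s hs.1).continuousAt.continuousWithinAt
    have : (0:ℝ) ∈ Set.Icc (f t) (f 0) := ⟨hlt.le, h0.le⟩
    obtain ⟨s, hs, hfs⟩ := intermediate_value_Icc' ht hfc this
    have := (linear_zero_iff hf hcont hs.1).1 hfs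
    linarith
  · have := (linear_zero_iff hf hcont ht).1 heq
    linarith
  · exact hgt

lemma linear_neg {f h : ℝ → ℝ}
    (hf : ∀ t ∈ Set.Ici (0:ℝ), HasDerivAt f (h t * f t) t)
    (hcont : ContinuousOn h (Set.Ici 0)) (h0 : f 0 < 0) :
    ∀ t ∈ Set.Ici (0:ℝ), f t < 0 := by
  intro t ht
  have hf' : ∀ t ∈ Set.Ici (0:ℝ), HasDerivAt (fun s => -f s) (h t * (-f t)) t := by
    intro s hs
    exact (hf s hs).neg.congr_deriv (by ring)
  have := linear_pos hf' hcont (by simpa using h0) t ht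
  linarith

lemma tendsto_of_monotoneOn_Ici {f : ℝ → ℝ} (hm : MonotoneOn f (Set.Ici 0)) {C : ℝ}
    (hb : ∀ t ∈ Set.Ici (0:ℝ), f t ≤ C) :
    ∃ L, Filter.Tendsto f Filter.atTop (nhds L) ∧ ∀ t ∈ Set.Ici (0:ℝ), f t ≤ L := by
  have hmF : Monotone (fun t => f (max t 0)) := fun s t hst =>
    hm (le_max_right s 0) (le_max_right t 0) (max_le_max hst le_rfl)
  have hbdd : BddAbove (Set.range (fun t => f (max t 0))) := by
    refine ⟨C, ?_⟩
    rintro _ ⟨t, rfl⟩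
    exact hb _ (le_max_right t 0)
  have hF := tendsto_atTop_ciSup hmF hbdd
  refine ⟨⨆ i, f (max i 0), ?_, ?_⟩
  · refine hF.congr' ?_
    filter_upwards [eventually_ge_atTop (0:ℝ)] with t ht
    simp [max_eq_left ht]
  · intro t ht
    have h2 : f (max t 0) ≤ ⨆ i, f (max i 0) := le_ciSup hbdd t
    simpa [max_eq_left (Set.mem_Ici.1 ht)] using h2

lemma tendsto_of_antitoneOn_Ici {f : ℝ → ℝ} (hm : AntitoneOn f (Set.Ici 0)) {C : ℝ}
    (hb : ∀ t ∈ Set.Ici (0:ℝ), C ≤ f t) :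
    ∃ L, Filter.Tendsto f Filter.atTop (nhds L) ∧ ∀ t ∈ Set.Ici (0:ℝ), L ≤ f t := by
  have hm' : MonotoneOn (fun t => -f t) (Set.Ici 0) := fun s hs t ht hst =>
    neg_le_neg (hm hs ht hst)
  obtain ⟨L, hL1, hL2⟩ := tendsto_of_monotoneOn_Ici hm' (C := -C)
    (fun t ht => neg_le_neg (hb t ht))
  refine ⟨-L, ?_, fun t ht => by linarith [hL2 t ht]⟩
  have := hL1.neg
  simpa using this

lemma no_unbounded {f f' : ℝ → ℝ} {T c C : ℝ} (hc : 0 < c)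
    (hd : ∀ t ∈ Set.Ici T, HasDerivAt f (f' t) t)
    (hge : ∀ t ∈ Set.Ici T, c ≤ f' t) (hb : ∀ t ∈ Set.Ici T, f t ≤ C) : False := by
  have hm : MonotoneOn (fun t => f t - c * t) (Set.Ici T) := by
    refine monoOn_Ici (f' := fun t => f' t - c) ?_ ?_
    · intro t ht
      exact ((hd t ht).sub ((hasDerivAt_id t).const_mul c)).congr_deriv (by ring)
    · intro t ht
      show 0 ≤ f' t - c
      linarith [hge t ht]
  set t1 := max T ((C - f T + 1) / c + T) with ht1
  have h1 : T ≤ t1 := le_max_left _ _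
  have h2 := hm Set.self_mem_Ici (Set.mem_Ici.2 h1) h1
  have h3 : (C - f T + 1) / c + T ≤ t1 := le_max_right _ _
  have h4 : c * ((C - f T + 1) / c) = C - f T + 1 := by field_simp
  have h5 : c * ((C - f T + 1) / c) ≤ c * (t1 - T) := by
    apply mul_le_mul_of_nonneg_left _ hc.le
    linarith
  have h6 := hb t1 (Set.mem_Ici.2 h1)
  simp only [] at h2
  nlinarith [hb T Set.self_mem_Ici]

lemma no_unbounded_below {f f' : ℝ → ℝ} {T c C : ℝ} (hc : 0 < c)
    (hd : ∀ t ∈ Set.Ici T, HasDerivAt f (f' t) t)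
    (hge : ∀ t ∈ Set.Ici T, f' t ≤ -c) (hb : ∀ t ∈ Set.Ici T, C ≤ f t) : False := by
  refine no_unbounded (f := fun t => -f t) (f' := fun t => -f' t) (C := -C) hc
    (fun t ht => (hd t ht).neg)
    (fun t ht => show c ≤ -f' t by linarith [hge t ht])
    (fun t ht => show -f t ≤ -C by linarith [hb t ht])

lemma mapClusterPt_eq {α : Type*} [TopologicalSpace α] [T2Space α] {f : ℝ → α} {p q : α}
    (h1 : MapClusterPt p Filter.atTop f) (h2 : Filter.Tendsto f Filter.atTop (nhds q)) :
    p = q := by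
  have h3 : ClusterPt p (nhds q) := h1.clusterPt.mono h2
  exact t2_iff_nhds.1 ‹T2Space α› h3

section Sol
variable {x y : ℝ → ℝ}

lemma sol_contx (hs : IsReducedSolution x y) : ContinuousOn x (Set.Ici 0) :=
  fun t ht => ((hs t ht).1.continuousAt).continuousWithinAt

lemma sol_conty (hs : IsReducedSolution x y) : ContinuousOn y (Set.Ici 0) :=
  fun t ht => ((hs t ht).2.continuousAt).continuousWithinAt

lemma g_cont (hs : IsReducedSolution x y) :
    ContinuousOn (fun t => y t - x t * Real.sin (x t)) (Set.Ici 0) :=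
  (sol_conty hs).sub ((sol_contx hs).mul
    (Real.continuous_sin.comp_continuousOn (sol_contx hs)))

lemma gH_cont (hs : IsReducedSolution x y) :
    ContinuousOn (fun t => -((y t)^2 + (Real.sin (x t) + x t * Real.cos (x t)) * x t))
      (Set.Ici 0) := by
  apply ContinuousOn.neg
  apply ContinuousOn.add
  · exact (sol_conty hs).pow 2
  · exact ((Real.continuous_sin.comp_continuousOn (sol_contx hs)).add
      ((sol_contx hs).mul (Real.continuous_cos.comp_continuousOn (sol_contx hs)))).mul
      (sol_contx hs)

lemma g_deriv (hs : IsReducedSolution x y) : ∀ t ∈ Set.Ici (0:ℝ),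
    HasDerivAt (fun t => y t - x t * Real.sin (x t))
      ((-((y t)^2 + (Real.sin (x t) + x t * Real.cos (x t)) * x t)) *
        (y t - x t * Real.sin (x t))) t := by
  intro t ht
  obtain ⟨hx, hy⟩ := hs t ht
  have hsin : HasDerivAt (fun t => Real.sin (x t))
      (Real.cos (x t) * (x t * (y t - x t * Real.sin (x t)))) t :=
    (Real.hasDerivAt_sin (x t)).comp t hx
  have hxsin := hx.mul hsin
  have h2 := hy.sub hxsin
  exact h2.congr_deriv (by ring)

lemma x_deriv' (hs : IsReducedSolution x y) : ∀ t ∈ Set.Ici (0:ℝ),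
    HasDerivAt x ((y t - x t * Real.sin (x t)) * x t) t := by
  intro t ht
  have := (hs t ht).1
  rwa [mul_comm] at this

lemma y_deriv' (hs : IsReducedSolution x y) : ∀ t ∈ Set.Ici (0:ℝ),
    HasDerivAt y ((-(y t) * (y t - x t * Real.sin (x t))) * y t) t := by
  intro t ht
  have := (hs t ht).2
  convert this using 1
  ring

lemma g_trichotomy (hs : IsReducedSolution x y) :
    (∀ t ∈ Set.Ici (0:ℝ), y t - x t * Real.sin (x t) = 0) ∨
    (∀ t ∈ Set.Ici (0:ℝ), 0 < y t - x t * Real.sin (x t)) ∨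
    (∀ t ∈ Set.Ici (0:ℝ), y t - x t * Real.sin (x t) < 0) := by
  rcases lt_trichotomy (y 0 - x 0 * Real.sin (x 0)) 0 with h | h | h
  · exact Or.inr (Or.inr (linear_neg (g_deriv hs) (gH_cont hs) h))
  · exact Or.inl (fun t ht => (linear_zeroiff' hs ht).2 h)
  · exact Or.inr (Or.inl (linear_pos (g_deriv hs) (gH_cont hs) h))
where linear_zeroiff' (hs : IsReducedSolution x y) {t : ℝ} (ht : 0 ≤ t) :
    (y t - x t * Real.sin (x t) = 0) ↔ (y 0 - x 0 * Real.sin (x 0) = 0) :=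
  linear_zero_iff (g_deriv hs) (gH_cont hs) ht

lemma x_trichotomy (hs : IsReducedSolution x y) :
    (∀ t ∈ Set.Ici (0:ℝ), x t = 0) ∨
    (∀ t ∈ Set.Ici (0:ℝ), 0 < x t) ∨
    (∀ t ∈ Set.Ici (0:ℝ), x t < 0) := by
  rcases lt_trichotomy (x 0) 0 with h | h | h
  · exact Or.inr (Or.inr (linear_neg (x_deriv' hs) (g_cont hs) h))
  · exact Or.inl (fun t ht => (linear_zero_iff (x_deriv' hs) (g_cont hs) ht).2 h)
  · exact Or.inr (Or.inl (linear_pos (x_deriv' hs) (g_cont hs) h))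

end Sol

lemma sin_mul_nonneg {u : ℝ} (h : |u| ≤ π) : 0 ≤ u * Real.sin u := by
  rcases le_or_gt 0 u with hu | hu
  · exact mul_nonneg hu (Real.sin_nonneg_of_nonneg_of_le_pi hu (by rwa [abs_of_nonneg hu] at h))
  · have h1 : Real.sin u ≤ 0 := by
      have h2 := Real.sin_nonneg_of_nonneg_of_le_pi (x := -u) (by linarith)
        (by rwa [abs_of_neg hu] at h)
      rw [Real.sin_neg] at h2
      linarith
    nlinarith

lemma sin_mul_le_sq (u : ℝ) : u * Real.sin u ≤ u ^ 2 := by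
  have h := Real.abs_sin_le_abs (x := u)
  calc u * Real.sin u ≤ |u * Real.sin u| := le_abs_self _
    _ = |u| * |Real.sin u| := abs_mul _ _
    _ ≤ |u| * |u| := by nlinarith [abs_nonneg u]
    _ = u ^ 2 := by rw [← abs_mul, abs_mul_self u, sq]

lemma core {b : ℝ} (hb0 : 0 < b) (hb : b ≤ 1/2) {x y : ℝ → ℝ}
    (hs : IsReducedSolution x y)
    (hx0 : |x 0| < b * Real.sin b) (hy0 : |y 0| < b * Real.sin b) :
    ∀ t ∈ Set.Ici (0:ℝ), |x t| < b ∧ |y t| < b * Real.sin b := by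
  have hpi : (3:ℝ) < π := Real.pi_gt_three
  have hsb : 0 < Real.sin b := Real.sin_pos_of_pos_of_lt_pi hb0 (by linarith)
  have hbs : 0 < b * Real.sin b := mul_pos hb0 hsb
  have hsb1 : Real.sin b < 1 := by
    have := Real.sin_lt hb0
    linarith
  have hbsb : b * Real.sin b < b := by nlinarith
  rcases g_trichotomy hs with h0 | hpos | hneg
  · -- g ≡ 0 : constant solution
    have hxc := const_of_Ici (f := x) (f' := fun t => x t * (y t - x t * Real.sin (x t)))
      (fun t ht => (hs t ht).1) (fun t ht => show x t * (y t - x t * Real.sin (x t)) = 0 by rw [h0 t ht, mul_zero])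
    have hyc := const_of_Ici (f := y) (f' := fun t => -(y t)^2 * (y t - x t * Real.sin (x t)))
      (fun t ht => (hs t ht).2) (fun t ht => show -(y t)^2 * (y t - x t * Real.sin (x t)) = 0 by rw [h0 t ht, mul_zero])
    intro t ht
    rw [hxc t ht, hyc t ht]
    exact ⟨hx0.trans hbsb, hy0⟩
  · -- g > 0
    have hyanti : AntitoneOn y (Set.Ici 0) := by
      refine antiOn_Ici (f' := fun t => -(y t)^2 * (y t - x t * Real.sin (x t)))
        (fun t ht => (hs t ht).2) (fun t ht => ?_)
      have := hpos t ht
      show -(y t)^2 * (y t - x t * Real.sin (x t)) ≤ 0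
      nlinarith [sq_nonneg (y t)]
    have hxb : ∀ t ∈ Set.Ici (0:ℝ), |x t| < b := by
      intro t ht
      by_contra hcon
      push_neg at hcon
      have hfc : ContinuousOn (fun s => |x s|) (Set.Icc 0 t) :=
        ((sol_contx hs).mono Set.Icc_subset_Ici_self).abs
      have hmem : b ∈ Set.Icc (|x 0|) (|x t|) := ⟨(hx0.trans hbsb).le, hcon⟩
      obtain ⟨s, hs', hxs⟩ := intermediate_value_Icc (Set.mem_Ici.1 ht) hfc hmem
      have hs0 : (0:ℝ) ≤ s := hs'.1
      have hgs := hpos s hs0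
      have hys : y s ≤ y 0 := hyanti Set.self_mem_Ici hs0 hs0
      have hxsin : x s * Real.sin (x s) = b * Real.sin b := by
        rcases abs_eq hb0.le |>.1 hxs with h | h
        · rw [h]
        · rw [h, Real.sin_neg]; ring
      rw [hxsin] at hgs
      have : y 0 ≤ |y 0| := le_abs_self _
      linarith
    intro t ht
    refine ⟨hxb t ht, ?_⟩
    have h1 : 0 ≤ x t * Real.sin (x t) := sin_mul_nonneg (by linarith [hxb t ht])
    have h2 := hpos t ht
    have h3 : y t ≤ y 0 := hyanti Set.self_mem_Ici ht ht
    have h4 : y 0 ≤ |y 0| := le_abs_self _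
    rw [abs_lt]
    constructor <;> linarith
  · -- g < 0
    have hx2anti : AntitoneOn (fun t => (x t)^2) (Set.Ici 0) := by
      refine antiOn_Ici (f' := fun t => 2 * (x t)^2 * (y t - x t * Real.sin (x t)))
        (fun t ht => ?_) (fun t ht => ?_)
      · have := ((hs t ht).1).pow 2
        exact this.congr_deriv (by ring)
      · have := hneg t ht
        show 2 * (x t)^2 * (y t - x t * Real.sin (x t)) ≤ 0
        nlinarith [sq_nonneg (x t)]
    have hymono : MonotoneOn y (Set.Ici 0) := by
      refine monoOn_Ici (f' := fun t => -(y t)^2 * (y t - x t * Real.sin (x t)))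
        (fun t ht => (hs t ht).2) (fun t ht => ?_)
      have := hneg t ht
      show 0 ≤ -(y t)^2 * (y t - x t * Real.sin (x t))
      nlinarith [sq_nonneg (y t)]
    intro t ht
    have hx2 : (x t)^2 ≤ (x 0)^2 := hx2anti Set.self_mem_Ici ht ht
    have hxt : |x t| ≤ |x 0| := by
      have h5 := abs_le_of_sq_le_sq' (by rwa [sq_abs] : (x t)^2 ≤ (|x 0|)^2) (abs_nonneg _)
      exact abs_le.2 h5
    refine ⟨lt_of_le_of_lt hxt (hx0.trans hbsb), ?_⟩
    have h6 : y 0 ≤ y t := hymono Set.self_mem_Ici ht ht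
    have h7 : y t < x t * Real.sin (x t) := by linarith [hneg t ht]
    have h8 : x t * Real.sin (x t) ≤ (x t)^2 := sin_mul_le_sq _
    have h9 : (x 0)^2 ≤ (b * Real.sin b)^2 := by
      rw [← sq_abs (x 0)]
      nlinarith [abs_nonneg (x 0)]
    have h10 : (b * Real.sin b)^2 < b * Real.sin b := by nlinarith
    have h11 : -(b * Real.sin b) < y 0 := (abs_lt.1 hy0).1
    rw [abs_lt]
    constructor <;> linarith

theorem part_i : ∀ ε > 0, ∃ δ > 0, ∀ x y : ℝ → ℝ, IsReducedSolution x y →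
      ‖(x 0, y 0)‖ < δ → ∀ t : ℝ, 0 ≤ t → ‖(x t, y t)‖ < ε := by
  intro ε hε
  set b := min ε (1/2) with hbdef
  have hb0 : 0 < b := lt_min hε (by norm_num)
  have hb : b ≤ 1/2 := min_le_right _ _
  have hbe : b ≤ ε := min_le_left _ _
  have hpi : (3:ℝ) < π := Real.pi_gt_three
  have hsb : 0 < Real.sin b := Real.sin_pos_of_pos_of_lt_pi hb0 (by linarith)
  have hsb1 : Real.sin b < 1 := by linarith [Real.sin_lt hb0]
  refine ⟨b * Real.sin b, mul_pos hb0 hsb, ?_⟩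
  intro x y hs hnorm t ht
  rw [Prod.norm_def] at hnorm
  simp only [Real.norm_eq_abs] at hnorm
  obtain ⟨hx0, hy0⟩ := max_lt_iff.1 hnorm
  obtain ⟨h1, h2⟩ := core hb0 hb hs hx0 hy0 t ht
  rw [Prod.norm_def]
  simp only [Real.norm_eq_abs]
  apply max_lt
  · exact h1.trans_le hbe
  · have : b * Real.sin b < b := by nlinarith
    linarith

theorem part_ii : ∀ δ > 0, ∃ x y : ℝ → ℝ, IsReducedSolution x y ∧ ‖(x 0, y 0)‖ < δ ∧
      ¬ Filter.Tendsto (fun t : ℝ => (x t, y t)) Filter.atTop (nhds ((0 : ℝ), (0 : ℝ))) := by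
  intro δ hδ
  set a := min δ 1 / 2 with hadef
  have ha0 : 0 < a := by
    have : 0 < min δ 1 := lt_min hδ one_pos
    positivity
  have haδ : a < δ := by
    have h1 : min δ 1 ≤ δ := min_le_left _ _
    rw [hadef]; linarith
  refine ⟨fun _ => a, fun _ => a * Real.sin a, ?_, ?_, ?_⟩
  · intro t ht
    constructor
    · simpa using hasDerivAt_const t a
    · simpa using hasDerivAt_const t (a * Real.sin a)
  · rw [Prod.norm_def]
    simp only [Real.norm_eq_abs]
    apply max_lt
    · rw [abs_of_pos ha0]; exact haδ
    · have h2 : |a * Real.sin a| ≤ |a| := by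
        rw [abs_mul]
        nlinarith [Real.sin_le_one a, Real.neg_one_le_sin a, abs_nonneg a,
          abs_le.2 ⟨Real.neg_one_le_sin a, Real.sin_le_one a⟩]
      rw [abs_of_pos ha0] at h2
      linarith
  · intro hT
    have h2 : Filter.Tendsto (fun _ : ℝ => (a, a * Real.sin a)) Filter.atTop
        (nhds (a, a * Real.sin a)) := tendsto_const_nhds
    have h3 := tendsto_nhds_unique hT h2
    have h4 : (0:ℝ) = a := congrArg Prod.fst h3
    linarith

set_option maxHeartbeats 2000000 in
theorem part_iii : ∃ δ > 0, ∀ x y : ℝ → ℝ, IsReducedSolution x y → ‖(x 0, y 0)‖ < δ →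
      ∀ p : ℝ × ℝ, MapClusterPt p Filter.atTop (fun t : ℝ => (x t, y t)) →
        ∃ a : ℝ, p = (a, a * Real.sin a) := by
  have hpi : (3:ℝ) < π := Real.pi_gt_three
  have hb0 : (0:ℝ) < 1/2 := by norm_num
  have hsb : 0 < Real.sin (1/2) := Real.sin_pos_of_pos_of_lt_pi hb0 (by linarith)
  refine ⟨(1/2) * Real.sin (1/2), mul_pos hb0 hsb, ?_⟩
  intro x y hs hnorm p hp
  rw [Prod.norm_def] at hnorm
  simp only [Real.norm_eq_abs] at hnorm
  obtain ⟨hx0, hy0⟩ := max_lt_iff.1 hnorm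
  have hcore := core hb0 le_rfl hs hx0 hy0
  suffices h : ∃ a L : ℝ, Filter.Tendsto x Filter.atTop (nhds a) ∧
      Filter.Tendsto y Filter.atTop (nhds L) ∧ L = a * Real.sin a by
    obtain ⟨a, L, hxa, hyL, hL⟩ := h
    refine ⟨a, ?_⟩
    have h2 := mapClusterPt_eq hp (hxa.prodMk_nhds hyL)
    rw [h2, hL]
  have hxd : ∀ t ∈ Set.Ici (0:ℝ),
      HasDerivAt x (x t * (y t - x t * Real.sin (x t))) t := fun t ht => (hs t ht).1
  have hyd : ∀ t ∈ Set.Ici (0:ℝ),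
      HasDerivAt y (-(y t)^2 * (y t - x t * Real.sin (x t))) t := fun t ht => (hs t ht).2
  rcases g_trichotomy hs with h0 | hpos | hneg
  · -- g ≡ 0: constant solution
    have hxc := const_of_Ici hxd (fun t ht =>
      show x t * (y t - x t * Real.sin (x t)) = 0 by rw [h0 t ht, mul_zero])
    have hyc := const_of_Ici hyd (fun t ht =>
      show -(y t)^2 * (y t - x t * Real.sin (x t)) = 0 by rw [h0 t ht, mul_zero])
    refine ⟨x 0, y 0, ?_, ?_, ?_⟩
    · refine Filter.Tendsto.congr' ?_ tendsto_const_nhds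
      filter_upwards [eventually_ge_atTop (0:ℝ)] with t ht
      exact (hxc t ht).symm
    · refine Filter.Tendsto.congr' ?_ tendsto_const_nhds
      filter_upwards [eventually_ge_atTop (0:ℝ)] with t ht
      exact (hyc t ht).symm
    · have := h0 0 Set.self_mem_Ici
      linarith
  · -- g > 0
    have hyanti : AntitoneOn y (Set.Ici 0) := by
      refine antiOn_Ici hyd (fun t ht => ?_)
      have := hpos t ht
      show -(y t)^2 * (y t - x t * Real.sin (x t)) ≤ 0
      nlinarith [sq_nonneg (y t)]
    have hybdd : ∀ t ∈ Set.Ici (0:ℝ), (0:ℝ) ≤ y t := by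
      intro t ht
      have h1 := hpos t ht
      have h2 : 0 ≤ x t * Real.sin (x t) :=
        sin_mul_nonneg (by linarith [(hcore t ht).1])
      linarith
    obtain ⟨L, hyL, hyge⟩ := tendsto_of_antitoneOn_Ici hyanti hybdd
    rcases x_trichotomy hs with hxz | hxp | hxn
    · -- x ≡ 0, a = 0
      have hxa : Filter.Tendsto x Filter.atTop (nhds 0) := by
        refine Filter.Tendsto.congr' ?_ tendsto_const_nhds
        filter_upwards [eventually_ge_atTop (0:ℝ)] with t ht
        exact (hxz t ht).symm
      refine ⟨0, L, hxa, hyL, ?_⟩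
      rw [Real.sin_zero, mul_zero]
      by_contra hL
      have hL0 : 0 ≤ L := ge_of_tendsto hyL
        (by filter_upwards [eventually_ge_atTop (0:ℝ)] with t ht; exact hybdd t ht)
      have hLpos : 0 < L := lt_of_le_of_ne hL0 (Ne.symm hL)
      refine no_unbounded_below (T := 0) (c := L^3) (C := L) (by positivity) hyd ?_ hyge
      intro t ht
      have h1 : L ≤ y t := hyge t ht
      have h2 : x t = 0 := hxz t ht
      show -(y t)^2 * (y t - x t * Real.sin (x t)) ≤ -L^3
      rw [h2]
      have h3 : L^3 ≤ (y t)^3 := pow_le_pow_left₀ hLpos.le h1 3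
      simp only [zero_mul, sub_zero]
      nlinarith [h3]
    · -- x > 0
      have hxmono : MonotoneOn x (Set.Ici 0) := by
        refine monoOn_Ici hxd (fun t ht => ?_)
        show 0 ≤ x t * (y t - x t * Real.sin (x t))
        exact mul_nonneg (hxp t ht).le (hpos t ht).le
      obtain ⟨a, hxa, hxle⟩ := tendsto_of_monotoneOn_Ici hxmono (C := 1/2)
        (fun t ht => (le_abs_self _).trans (hcore t ht).1.le)
      refine ⟨a, L, hxa, hyL, ?_⟩
      by_contra hL
      have hgconv : Filter.Tendsto (fun t => y t - x t * Real.sin (x t)) Filter.atTop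
          (nhds (L - a * Real.sin a)) :=
        hyL.sub (hxa.mul ((Real.continuous_sin.tendsto a).comp hxa))
      have hγge : 0 ≤ L - a * Real.sin a := ge_of_tendsto hgconv
        (by filter_upwards [eventually_ge_atTop (0:ℝ)] with t ht; exact (hpos t ht).le)
      have hγ : 0 < L - a * Real.sin a := by
        rcases hγge.eq_or_lt with h | h
        · exact absurd (by linarith) hL
        · exact h
      set γ := L - a * Real.sin a with hγdef
      obtain ⟨T, hT⟩ := eventually_atTop.1 (hgconv.eventually
        (eventually_ge_nhds (by linarith : γ/2 < γ)))
      have hx00 : 0 < x 0 := hxp 0 Set.self_mem_Ici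
      refine no_unbounded (T := max T 0) (c := x 0 * (γ/2)) (C := 1/2)
        (mul_pos hx00 (by linarith))
        (fun t ht => hxd t (le_trans (le_max_right T 0) ht)) ?_
        (fun t ht => (le_abs_self _).trans
          (hcore t (le_trans (le_max_right T 0) ht)).1.le)
      intro t ht
      have ht0 : (0:ℝ) ≤ t := le_trans (le_max_right T 0) ht
      have h1 : x 0 ≤ x t := hxmono Set.self_mem_Ici ht0 ht0
      have h2 : γ/2 ≤ y t - x t * Real.sin (x t) := hT t (le_trans (le_max_left T 0) ht)
      show x 0 * (γ/2) ≤ x t * (y t - x t * Real.sin (x t))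
      nlinarith [hxp t ht0]
    · -- x < 0
      have hxanti : AntitoneOn x (Set.Ici 0) := by
        refine antiOn_Ici hxd (fun t ht => ?_)
        show x t * (y t - x t * Real.sin (x t)) ≤ 0
        exact mul_nonpos_of_nonpos_of_nonneg (hxn t ht).le (hpos t ht).le
      obtain ⟨a, hxa, hxge⟩ := tendsto_of_antitoneOn_Ici hxanti (C := -(1/2))
        (fun t ht => by linarith [(abs_lt.1 (hcore t ht).1).1])
      refine ⟨a, L, hxa, hyL, ?_⟩
      by_contra hL
      have hgconv : Filter.Tendsto (fun t => y t - x t * Real.sin (x t)) Filter.atTop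
          (nhds (L - a * Real.sin a)) :=
        hyL.sub (hxa.mul ((Real.continuous_sin.tendsto a).comp hxa))
      have hγge : 0 ≤ L - a * Real.sin a := ge_of_tendsto hgconv
        (by filter_upwards [eventually_ge_atTop (0:ℝ)] with t ht; exact (hpos t ht).le)
      have hγ : 0 < L - a * Real.sin a := by
        rcases hγge.eq_or_lt with h | h
        · exact absurd (by linarith) hL
        · exact h
      set γ := L - a * Real.sin a with hγdef
      obtain ⟨T, hT⟩ := eventually_atTop.1 (hgconv.eventually
        (eventually_ge_nhds (by linarith : γ/2 < γ)))
      have hx00 : x 0 < 0 := hxn 0 Set.self_mem_Ici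
      refine no_unbounded_below (T := max T 0) (c := -(x 0 * (γ/2))) (C := -(1/2))
        (by nlinarith)
        (fun t ht => hxd t (le_trans (le_max_right T 0) ht)) ?_
        (fun t ht => by linarith [(abs_lt.1
          (hcore t (le_trans (le_max_right T 0) ht)).1).1])
      intro t ht
      have ht0 : (0:ℝ) ≤ t := le_trans (le_max_right T 0) ht
      have h1 : x t ≤ x 0 := hxanti Set.self_mem_Ici ht0 ht0
      have h2 : γ/2 ≤ y t - x t * Real.sin (x t) := hT t (le_trans (le_max_left T 0) ht)
      show x t * (y t - x t * Real.sin (x t)) ≤ -(-(x 0 * (γ/2)))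
      rw [neg_neg]
      nlinarith [hxn t ht0]
  · -- g < 0
    have hymono : MonotoneOn y (Set.Ici 0) := by
      refine monoOn_Ici hyd (fun t ht => ?_)
      have := hneg t ht
      show 0 ≤ -(y t)^2 * (y t - x t * Real.sin (x t))
      nlinarith [sq_nonneg (y t)]
    have hybdd : ∀ t ∈ Set.Ici (0:ℝ), y t ≤ 1 := by
      intro t ht
      have h1 := hneg t ht
      have h2 : x t * Real.sin (x t) ≤ (x t)^2 := sin_mul_le_sq _
      have h3 : |x t| < 1/2 := (hcore t ht).1
      nlinarith [abs_nonneg (x t), sq_abs (x t)]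
    obtain ⟨L, hyL, hyle⟩ := tendsto_of_monotoneOn_Ici hymono hybdd
    -- helper fact: in the a = 0 situation we derive a contradiction via y
    have ycontra : ∀ γ : ℝ, γ < 0 → (∀ t ∈ Set.Ici (0:ℝ), y t ≤ L) → L = γ →
        (∀ᶠ t in Filter.atTop, y t - x t * Real.sin (x t) ≤ γ/2) → False := by
      intro γ hγ hyle' hLγ hev
      obtain ⟨T, hT⟩ := eventually_atTop.1 hev
      refine no_unbounded (T := max T 0) (c := L^2 * (-(γ/2))) (C := L) ?_
        (fun t ht => hyd t (le_trans (le_max_right T 0) ht)) ?_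
        (fun t ht => hyle' t (le_trans (le_max_right T 0) ht))
      · have hL0 : L < 0 := by rw [hLγ]; exact hγ
        have h5 : 0 < L * L := mul_pos_of_neg_of_neg hL0 hL0
        nlinarith
      · intro t ht
        have ht0 : (0:ℝ) ≤ t := le_trans (le_max_right T 0) ht
        have h1 : y t ≤ L := hyle' t ht0
        have h2 : y t - x t * Real.sin (x t) ≤ γ/2 := hT t (le_trans (le_max_left T 0) ht)
        have hL0 : L < 0 := by rw [hLγ]; exact hγ
        have hy2 : L^2 ≤ (y t)^2 := by
          nlinarith [mul_nonneg (sub_nonneg.2 h1) (by linarith : (0:ℝ) ≤ -(y t + L))]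
        have h6 : L^2 * (-(γ/2)) ≤ (y t)^2 * (-(γ/2)) :=
          mul_le_mul_of_nonneg_right hy2 (by linarith)
        have h7 : (y t)^2 * (-(γ/2)) ≤ (y t)^2 * (-(y t - x t * Real.sin (x t))) :=
          mul_le_mul_of_nonneg_left (by linarith) (sq_nonneg _)
        show L^2 * (-(γ/2)) ≤ -(y t)^2 * (y t - x t * Real.sin (x t))
        nlinarith [h6, h7]
    rcases x_trichotomy hs with hxz | hxp | hxn
    · -- x ≡ 0
      have hxa : Filter.Tendsto x Filter.atTop (nhds 0) := by
        refine Filter.Tendsto.congr' ?_ tendsto_const_nhds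
        filter_upwards [eventually_ge_atTop (0:ℝ)] with t ht
        exact (hxz t ht).symm
      refine ⟨0, L, hxa, hyL, ?_⟩
      rw [Real.sin_zero, mul_zero]
      by_contra hL
      have hgconv : Filter.Tendsto (fun t => y t - x t * Real.sin (x t)) Filter.atTop
          (nhds (L - 0 * Real.sin 0)) :=
        hyL.sub (hxa.mul ((Real.continuous_sin.tendsto 0).comp hxa))
      rw [Real.sin_zero, mul_zero, sub_zero] at hgconv
      have hγle : L ≤ 0 := le_of_tendsto hgconv
        (by filter_upwards [eventually_ge_atTop (0:ℝ)] with t ht; exact (hneg t ht).le)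
      have hγ : L < 0 := lt_of_le_of_ne hγle hL
      exact ycontra L hγ hyle rfl (hgconv.eventually
        (eventually_le_nhds (by linarith : L < L/2)))
    · -- x > 0
      have hxanti : AntitoneOn x (Set.Ici 0) := by
        refine antiOn_Ici hxd (fun t ht => ?_)
        show x t * (y t - x t * Real.sin (x t)) ≤ 0
        exact mul_nonpos_of_nonneg_of_nonpos (hxp t ht).le (hneg t ht).le
      obtain ⟨a, hxa, hxge⟩ := tendsto_of_antitoneOn_Ici hxanti (C := 0)
        (fun t ht => (hxp t ht).le)
      refine ⟨a, L, hxa, hyL, ?_⟩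
      by_contra hL
      have hgconv : Filter.Tendsto (fun t => y t - x t * Real.sin (x t)) Filter.atTop
          (nhds (L - a * Real.sin a)) :=
        hyL.sub (hxa.mul ((Real.continuous_sin.tendsto a).comp hxa))
      have hγle : L - a * Real.sin a ≤ 0 := le_of_tendsto hgconv
        (by filter_upwards [eventually_ge_atTop (0:ℝ)] with t ht; exact (hneg t ht).le)
      have hγ : L - a * Real.sin a < 0 := by
        rcases hγle.lt_or_eq with h | h
        · exact h
        · exact absurd (by linarith) hL
      set γ := L - a * Real.sin a with hγdef
      have ha0 : 0 ≤ a := ge_of_tendsto hxa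
        (by filter_upwards [eventually_ge_atTop (0:ℝ)] with t ht; exact (hxp t ht).le)
      rcases ha0.eq_or_lt with ha | ha
      · -- a = 0 : use y
        have hLγ : L = γ := by rw [hγdef, ← ha]; simp
        exact ycontra γ hγ hyle hLγ (hgconv.eventually
          (eventually_le_nhds (by linarith : γ < γ/2)))
      · -- a > 0 : x descends to -∞
        obtain ⟨T, hT⟩ := eventually_atTop.1 (hgconv.eventually
          (eventually_le_nhds (by linarith : γ < γ/2)))
        have hcpos : (0:ℝ) < -(a * (γ/2)) := by nlinarith
        have harg2 : ∀ t ∈ Set.Ici (max T 0),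
            x t * (y t - x t * Real.sin (x t)) ≤ -(-(a * (γ/2))) := by
          intro t ht
          have ht0 : (0:ℝ) ≤ t := le_trans (le_max_right T 0) ht
          have h1 : a ≤ x t := hxge t ht0
          have h2 : y t - x t * Real.sin (x t) ≤ γ/2 := hT t (le_trans (le_max_left T 0) ht)
          have h3 : x t * (y t - x t * Real.sin (x t)) ≤ x t * (γ/2) :=
            mul_le_mul_of_nonneg_left h2 (hxp t ht0).le
          have h4 : x t * (γ/2) ≤ a * (γ/2) :=
            mul_le_mul_of_nonpos_right h1 (by linarith)
          rw [neg_neg]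
          linarith
        exact no_unbounded_below (T := max T 0) (c := -(a * (γ/2))) (C := 0) hcpos
          (fun t ht => hxd t (le_trans (le_max_right T 0) ht)) harg2
          (fun t ht => (hxp t (le_trans (le_max_right T 0) ht)).le)
    · -- x < 0
      have hxmono : MonotoneOn x (Set.Ici 0) := by
        refine monoOn_Ici hxd (fun t ht => ?_)
        show 0 ≤ x t * (y t - x t * Real.sin (x t))
        nlinarith [mul_nonneg (neg_nonneg.2 (hxn t ht).le) (neg_nonneg.2 (hneg t ht).le)]
      obtain ⟨a, hxa, hxle⟩ := tendsto_of_monotoneOn_Ici hxmono (C := 0)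
        (fun t ht => (hxn t ht).le)
      refine ⟨a, L, hxa, hyL, ?_⟩
      by_contra hL
      have hgconv : Filter.Tendsto (fun t => y t - x t * Real.sin (x t)) Filter.atTop
          (nhds (L - a * Real.sin a)) :=
        hyL.sub (hxa.mul ((Real.continuous_sin.tendsto a).comp hxa))
      have hγle : L - a * Real.sin a ≤ 0 := le_of_tendsto hgconv
        (by filter_upwards [eventually_ge_atTop (0:ℝ)] with t ht; exact (hneg t ht).le)
      have hγ : L - a * Real.sin a < 0 := by
        rcases hγle.lt_or_eq with h | h
        · exact h
        · exact absurd (by linarith) hL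
      set γ := L - a * Real.sin a with hγdef
      have ha0 : a ≤ 0 := le_of_tendsto hxa
        (by filter_upwards [eventually_ge_atTop (0:ℝ)] with t ht; exact (hxn t ht).le)
      rcases ha0.lt_or_eq with ha | ha
      · -- a < 0 : x ascends to ∞
        obtain ⟨T, hT⟩ := eventually_atTop.1 (hgconv.eventually
          (eventually_le_nhds (by linarith : γ < γ/2)))
        have hcpos : (0:ℝ) < a * (γ/2) := mul_pos_of_neg_of_neg ha (by linarith)
        have harg2 : ∀ t ∈ Set.Ici (max T 0),
            a * (γ/2) ≤ x t * (y t - x t * Real.sin (x t)) := by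
          intro t ht
          have ht0 : (0:ℝ) ≤ t := le_trans (le_max_right T 0) ht
          have h1 : x t ≤ a := hxle t ht0
          have h2 : y t - x t * Real.sin (x t) ≤ γ/2 := hT t (le_trans (le_max_left T 0) ht)
          have h3 : x t * (γ/2) ≤ x t * (y t - x t * Real.sin (x t)) :=
            mul_le_mul_of_nonpos_left h2 (hxn t ht0).le
          have h4 : a * (γ/2) ≤ x t * (γ/2) :=
            mul_le_mul_of_nonpos_right h1 (by linarith)
          linarith
        exact no_unbounded (T := max T 0) (c := a * (γ/2)) (C := 0) hcpos
          (fun t ht => hxd t (le_trans (le_max_right T 0) ht)) harg2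
          (fun t ht => (hxn t (le_trans (le_max_right T 0) ht)).le)
      · -- a = 0 : use y
        have hLγ : L = γ := by rw [hγdef, ha]; simp
        exact ycontra γ hγ hyle hLγ (hgconv.eventually
          (eventually_le_nhds (by linarith : γ < γ/2)))

/-- Dynamics of the reduced appendix example on its center manifold:
(i) the origin is Lyapunov stable; (ii) it is not asymptotically stable; (iii) every
ω-limit point of a solution starting near the origin is an equilibrium `(a, a sin a)`. -/
theorem reduced_appendix_dynamics :
    (∀ ε > 0, ∃ δ > 0, ∀ x y : ℝ → ℝ, IsReducedSolution x y →
      ‖(x 0, y 0)‖ < δ → ∀ t : ℝ, 0 ≤ t → ‖(x t, y t)‖ < ε) ∧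
    (∀ δ > 0, ∃ x y : ℝ → ℝ, IsReducedSolution x y ∧ ‖(x 0, y 0)‖ < δ ∧
      ¬ Filter.Tendsto (fun t : ℝ => (x t, y t)) Filter.atTop (nhds ((0 : ℝ), (0 : ℝ)))) ∧
    (∃ δ > 0, ∀ x y : ℝ → ℝ, IsReducedSolution x y → ‖(x 0, y 0)‖ < δ →
      ∀ p : ℝ × ℝ, MapClusterPt p Filter.atTop (fun t : ℝ => (x t, y t)) →
        ∃ a : ℝ, p = (a, a * Real.sin a)) :=
  ⟨part_i, part_ii, part_iii⟩
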